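/- For all interval-posets I1 and I2, the identity Σ_{I ∈ 𝔹(I1,I2)} x^{trees(I)} = x^{trees(I1)+1} · (1 + x + x² + ⋯ + x^{trees(I2)}) holds in ℤ[x]. -/

import Mathlib

/-- An interval-poset: a partial order on `{1, …, n}` in which, whenever
`a ⊴ c` and `a < c`, all `a < b < c` satisfy `b ⊴ c`, and whenever `c ⊴ a` and
`a < c`, all `a < b < c` satisfy `b ⊴ a`.  `rel x y` means "`x` is below `y`". -/
structure IntervalPoset : Type where
  n : ℕ
  rel : ℕ → ℕ → Prop
  supp : ∀ a b, rel a b → 1 ≤ a ∧ a ≤ n ∧ 1 ≤ b ∧ b ≤ n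
  refl : ∀ a, 1 ≤ a → a ≤ n → rel a a
  antisymm : ∀ a b, rel a b → rel b a → a = b
  trans : ∀ a b c, rel a b → rel b c → rel a c
  incCond : ∀ a b c, rel a c → a < b → b < c → rel b c
  decCond : ∀ a b c, rel c a → a < b → b < c → rel b a

/-- `decBelow I x y` : `x` is below `y` by a decreasing relation of `I`. -/
def decBelow (I : IntervalPoset) (x y : ℕ) : Prop := I.rel x y ∧ y < x

/-- Connectivity in `dec I` (the poset of decreasing relations of `I`). -/
def decConn (I : IntervalPoset) : ℕ → ℕ → Prop :=
  Relation.ReflTransGen (fun a b => decBelow I a b ∨ decBelow I b a)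

/-- `compMin I r` : `r` is the least label of a connected component of `dec I`. -/
def compMin (I : IntervalPoset) (r : ℕ) : Prop :=
  1 ≤ r ∧ r ≤ I.n ∧ ∀ y, decConn I r y → r ≤ y

/-- `trees I` : the number of connected components of `dec I`. -/
noncomputable def trees (I : IntervalPoset) : ℕ := {r | compMin I r}.ncard

/-- The composition `𝔹(I1, I2)` of two interval-posets: all interval-posets
`I` of size `I1.n + I2.n + 1` whose induced subposet on `{1, …, k1}` is `I1`,
whose induced subposet on `{k1+2, …, k1+k2+1}` is `I2` shifted by `k1+1`, with
`i ⊴ k1+1` for all `i ≤ k1` and `k1+1 ⊴ j` for no `j > k1+1`. -/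
def comp (I1 I2 : IntervalPoset) : Set IntervalPoset :=
  {I | I.n = I1.n + I2.n + 1 ∧
    (∀ a b, 1 ≤ a → a ≤ I1.n → 1 ≤ b → b ≤ I1.n → (I.rel a b ↔ I1.rel a b)) ∧
    (∀ a b, 1 ≤ a → a ≤ I2.n → 1 ≤ b → b ≤ I2.n →
      (I.rel (a + I1.n + 1) (b + I1.n + 1) ↔ I2.rel a b)) ∧
    (∀ i, 1 ≤ i → i ≤ I1.n → I.rel i (I1.n + 1)) ∧
    (∀ j, I1.n + 1 < j → ¬ I.rel (I1.n + 1) j)}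
namespace StmtAux

open Classical

/-- `m` is an admissible attachment size. -/
def adm (I2 : IntervalPoset) (m : ℕ) : Prop :=
  m ≤ I2.n ∧ ∀ a b, I2.rel a b → b ≤ m → a ≤ m

def Jrel (I1 I2 : IntervalPoset) (m x y : ℕ) : Prop :=
  (x ≤ I1.n ∧ y ≤ I1.n ∧ I1.rel x y) ∨
  (I1.n + 2 ≤ x ∧ I1.n + 2 ≤ y ∧ I2.rel (x - (I1.n + 1)) (y - (I1.n + 1))) ∨
  (y = I1.n + 1 ∧ 1 ≤ x ∧ x ≤ I1.n + 1 + m)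

noncomputable def J (I1 I2 : IntervalPoset) (m : ℕ) : IntervalPoset :=
  if hm : adm I2 m then
  { n := I1.n + I2.n + 1
    rel := Jrel I1 I2 m
    supp := by
      rintro a b (⟨ha, hb, h⟩ | ⟨ha, hb, h⟩ | ⟨hb, ha1, ha2⟩)
      · obtain ⟨h1, h2, h3, h4⟩ := I1.supp _ _ h; omega
      · obtain ⟨h1, h2, h3, h4⟩ := I2.supp _ _ h; omega
      · have := hm.1; omega
    refl := by
      intro a h1 h2
      rcases Nat.lt_or_ge a (I1.n + 1) with h | h
      · rcases Nat.lt_or_ge a (I1.n + 1) with _ | _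
        · exact Or.inl ⟨by omega, by omega, I1.refl a h1 (by omega)⟩
        · omega
      · rcases Nat.eq_or_lt_of_le h with h' | h'
        · exact Or.inr (Or.inr ⟨h'.symm, h1, by omega⟩)
        · exact Or.inr (Or.inl ⟨by omega, by omega, I2.refl _ (by omega) (by omega)⟩)
    antisymm := by
      rintro a b (⟨ha, hb, h⟩ | ⟨ha, hb, h⟩ | ⟨hb, ha1, ha2⟩)
        <;> rintro (⟨ha', hb', h'⟩ | ⟨ha', hb', h'⟩ | ⟨hb', ha1', ha2'⟩)
      · exact I1.antisymm _ _ h h'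
      · omega
      · omega
      · omega
      · have := I2.antisymm _ _ h h'; omega
      · omega
      · omega
      · omega
      · omega
    trans := by
      rintro a b c (⟨ha, hb, h⟩ | ⟨ha, hb, h⟩ | ⟨hb, ha1, ha2⟩)
        <;> rintro (⟨hb', hc', h'⟩ | ⟨hb', hc', h'⟩ | ⟨hc', hb1', hb2'⟩)
      · exact Or.inl ⟨ha, hc', I1.trans _ _ _ h h'⟩
      · omega
      · exact Or.inr (Or.inr ⟨hc', (I1.supp _ _ h).1, by omega⟩)
      · omega
      · exact Or.inr (Or.inl ⟨ha, hc', I2.trans _ _ _ h h'⟩)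
      · -- b in right block, b ⊴ k1+1 : use admissibility
        refine Or.inr (Or.inr ⟨hc', by omega, ?_⟩)
        have hbm : b - (I1.n + 1) ≤ m := by omega
        have := hm.2 _ _ h hbm
        omega
      · omega
      · omega
      · exact Or.inr (Or.inr ⟨hc', ha1, ha2⟩)
    incCond := by
      rintro a b c (⟨ha, hc, h⟩ | ⟨ha, hc, h⟩ | ⟨hc, ha1, ha2⟩) hab hbc
      · exact Or.inl ⟨by omega, hc, I1.incCond _ _ _ h (by omega) (by omega)⟩
      · refine Or.inr (Or.inl ⟨by omega, hc, I2.incCond _ _ _ h (by omega) (by omega)⟩)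
      · exact Or.inr (Or.inr ⟨hc, by omega, by omega⟩)
    decCond := by
      rintro a b c (⟨hc, ha, h⟩ | ⟨hc, ha, h⟩ | ⟨ha, hc1, hc2⟩) hab hbc
      · exact Or.inl ⟨by omega, ha, I1.decCond _ _ _ h (by omega) (by omega)⟩
      · refine Or.inr (Or.inl ⟨by omega, ha, I2.decCond _ _ _ h (by omega) (by omega)⟩)
      · exact Or.inr (Or.inr ⟨ha, by omega, by omega⟩) }
  else I1

variable {I1 I2 : IntervalPoset} {m : ℕ}

lemma J_n (hm : adm I2 m) : (J I1 I2 m).n = I1.n + I2.n + 1 := by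
  rw [J, dif_pos hm]

lemma J_rel (hm : adm I2 m) : (J I1 I2 m).rel = Jrel I1 I2 m := by
  rw [J, dif_pos hm]

end StmtAux
namespace StmtAux

variable {I1 I2 : IntervalPoset} {m : ℕ}

lemma decBelow_J (hm : adm I2 m) (x y : ℕ) :
    decBelow (J I1 I2 m) x y ↔
      decBelow I1 x y ∨
      (I1.n + 2 ≤ y ∧ decBelow I2 (x - (I1.n + 1)) (y - (I1.n + 1))) ∨
      (y = I1.n + 1 ∧ I1.n + 1 < x ∧ x ≤ I1.n + 1 + m) := by
  unfold decBelow
  rw [J_rel hm]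
  constructor
  · rintro ⟨(⟨ha, hb, h⟩ | ⟨ha, hb, h⟩ | ⟨hb, ha1, ha2⟩), hlt⟩
    · exact Or.inl ⟨h, hlt⟩
    · exact Or.inr (Or.inl ⟨hb, h, by omega⟩)
    · exact Or.inr (Or.inr ⟨hb, by omega, ha2⟩)
  · rintro (⟨h, hlt⟩ | ⟨hy, h, hlt⟩ | ⟨hy, h1, h2⟩)
    · obtain ⟨s1, s2, s3, s4⟩ := I1.supp _ _ h
      exact ⟨Or.inl ⟨s2, s4, h⟩, hlt⟩
    · obtain ⟨s1, s2, s3, s4⟩ := I2.supp _ _ h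
      exact ⟨Or.inr (Or.inl ⟨by omega, hy, h⟩), by omega⟩
    · exact ⟨Or.inr (Or.inr ⟨hy, by omega, h2⟩), by omega⟩

lemma decBelow_J_of_I1 (hm : adm I2 m) {x y : ℕ} (h : decBelow I1 x y) :
    decBelow (J I1 I2 m) x y := (decBelow_J hm x y).2 (Or.inl h)

lemma decBelow_J_of_I2 (hm : adm I2 m) {x y : ℕ} (h : decBelow I2 x y) :
    decBelow (J I1 I2 m) (x + (I1.n + 1)) (y + (I1.n + 1)) := by
  obtain ⟨s1, s2, s3, s4⟩ := I2.supp _ _ h.1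
  refine (decBelow_J hm _ _).2 (Or.inr (Or.inl ⟨by omega, ?_⟩))
  simpa using h

/-- connectivity in `dec I2` stays above `m` when `m` is admissible. -/
lemma conn_gt (hm : adm I2 m) {x y : ℕ} (h : decConn I2 x y) (hx : m < x) : m < y := by
  induction h with
  | refl => exact hx
  | tail _ step ih =>
    rcases step with ⟨h1, h2⟩ | ⟨h1, h2⟩
    · by_contra hc
      exact absurd (hm.2 _ _ h1 (by omega)) (by omega)
    · obtain ⟨s1, s2, s3, s4⟩ := I2.supp _ _ h1
      omega

lemma decConn_J_of_I1 (hm : adm I2 m) {x y : ℕ} (h : decConn I1 x y) :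
    decConn (J I1 I2 m) x y :=
  Relation.ReflTransGen.mono
    (fun a b (hab : decBelow I1 a b ∨ decBelow I1 b a) =>
      hab.imp (decBelow_J_of_I1 hm) (decBelow_J_of_I1 hm)) _ _ h

lemma decConn_J_of_I2 (hm : adm I2 m) {x y : ℕ} (h : decConn I2 x y) :
    decConn (J I1 I2 m) (x + (I1.n + 1)) (y + (I1.n + 1)) :=
  Relation.ReflTransGen.lift (fun z => z + (I1.n + 1))
    (fun a b (hab : decBelow I2 a b ∨ decBelow I2 b a) =>
      hab.imp (decBelow_J_of_I2 hm) (decBelow_J_of_I2 hm)) _ _ h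

lemma decConn_J_left (hm : adm I2 m) {r y : ℕ} (h : decConn (J I1 I2 m) r y)
    (hr : r ≤ I1.n) : y ≤ I1.n ∧ decConn I1 r y := by
  induction h with
  | refl => exact ⟨hr, Relation.ReflTransGen.refl⟩
  | tail _ step ih =>
    obtain ⟨hb, hconn⟩ := ih
    rcases step with hs | hs
    · rcases (decBelow_J hm _ _).1 hs with h' | ⟨hy, h'⟩ | ⟨hy, h1, h2⟩
      · obtain ⟨s1, s2, s3, s4⟩ := I1.supp _ _ h'.1
        exact ⟨s4, hconn.tail (Or.inl h')⟩
      · obtain ⟨s1, s2, s3, s4⟩ := I2.supp _ _ h'.1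
        omega
      · omega
    · rcases (decBelow_J hm _ _).1 hs with h' | ⟨hy, h'⟩ | ⟨hy, h1, h2⟩
      · obtain ⟨s1, s2, s3, s4⟩ := I1.supp _ _ h'.1
        exact ⟨s2, hconn.tail (Or.inr h')⟩
      · omega
      · omega

lemma decConn_J_mid (hm : adm I2 m) {y : ℕ} (h : decConn (J I1 I2 m) (I1.n + 1) y) :
    I1.n + 1 ≤ y ∧ y ≤ I1.n + 1 + m := by
  induction h with
  | refl => omega
  | tail _ step ih =>
    obtain ⟨hb1, hb2⟩ := ih
    rcases step with hs | hs
    · rcases (decBelow_J hm _ _).1 hs with ⟨hr, hl⟩ | ⟨hy, hr, hl⟩ | ⟨hy, h1, h2⟩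
      · obtain ⟨s1, s2, s3, s4⟩ := I1.supp _ _ hr
        omega
      · obtain ⟨s1, s2, s3, s4⟩ := I2.supp _ _ hr
        omega
      · omega
    · rcases (decBelow_J hm _ _).1 hs with ⟨hr, hl⟩ | ⟨hy, hr, hl⟩ | ⟨hy, h1, h2⟩
      · obtain ⟨s1, s2, s3, s4⟩ := I1.supp _ _ hr
        omega
      · obtain ⟨s1, s2, s3, s4⟩ := I2.supp _ _ hr
        have := hm.2 _ _ hr (by omega)
        omega
      · omega

lemma decConn_J_right (hm : adm I2 m) {x y : ℕ} (h : decConn (J I1 I2 m) x y)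
    (hx : I1.n + 2 + m ≤ x) :
    I1.n + 2 + m ≤ y ∧ decConn I2 (x - (I1.n + 1)) (y - (I1.n + 1)) := by
  induction h with
  | refl => exact ⟨hx, Relation.ReflTransGen.refl⟩
  | tail _ step ih =>
    obtain ⟨hb, hconn⟩ := ih
    rcases step with hs | hs
    · rcases (decBelow_J hm _ _).1 hs with ⟨hr, hl⟩ | ⟨hy, hr, hl⟩ | ⟨hy, h1, h2⟩
      · obtain ⟨s1, s2, s3, s4⟩ := I1.supp _ _ hr
        omega
      · obtain ⟨s1, s2, s3, s4⟩ := I2.supp _ _ hr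
        have hcm := conn_gt hm (Relation.ReflTransGen.single (Or.inl ⟨hr, hl⟩)) (by omega)
        exact ⟨by omega, hconn.tail (Or.inl ⟨hr, hl⟩)⟩
      · omega
    · rcases (decBelow_J hm _ _).1 hs with ⟨hr, hl⟩ | ⟨hy, hr, hl⟩ | ⟨hy, h1, h2⟩
      · obtain ⟨s1, s2, s3, s4⟩ := I1.supp _ _ hr
        omega
      · obtain ⟨s1, s2, s3, s4⟩ := I2.supp _ _ hr
        exact ⟨by omega, hconn.tail (Or.inr ⟨hr, hl⟩)⟩
      · omega

end StmtAux
namespace StmtAux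

variable {I1 I2 : IntervalPoset} {m : ℕ}

lemma compMin_J_iff (hm : adm I2 m) (r : ℕ) :
    compMin (J I1 I2 m) r ↔
      compMin I1 r ∨ r = I1.n + 1 ∨
        (∃ r', compMin I2 r' ∧ m < r' ∧ r = r' + (I1.n + 1)) := by
  constructor
  · rintro ⟨h1, h2, h3⟩
    rw [J_n hm] at h2
    rcases Nat.lt_or_ge r (I1.n + 1) with hr | hr
    · refine Or.inl ⟨h1, by omega, fun y hy => ?_⟩
      exact h3 y (decConn_J_of_I1 hm hy)
    · rcases Nat.eq_or_lt_of_le hr with hr' | hr'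
      · exact Or.inr (Or.inl hr'.symm)
      · rcases Nat.lt_or_ge (I1.n + 1 + m) r with hr2 | hr2
        · -- r ≥ I1.n + 2 + m : corresponds to a compMin of I2 above m
          refine Or.inr (Or.inr ⟨r - (I1.n + 1), ⟨by omega, by omega, fun y hy => ?_⟩,
            by omega, by omega⟩)
          have hc := decConn_J_of_I2 (I1 := I1) hm hy
          have hr3 : r - (I1.n + 1) + (I1.n + 1) = r := by omega
          rw [hr3] at hc
          have := h3 _ hc
          omega
        · -- I1.n + 1 < r ≤ I1.n + 1 + m : r is connected to the smaller I1.n + 1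
          exfalso
          have : decConn (J I1 I2 m) r (I1.n + 1) :=
            Relation.ReflTransGen.single
              (Or.inl ((decBelow_J hm _ _).2 (Or.inr (Or.inr ⟨rfl, hr', hr2⟩))))
          have := h3 _ this
          omega
  · rintro (⟨h1, h2, h3⟩ | rfl | ⟨r', ⟨h1, h2, h3⟩, hmr, rfl⟩)
    · refine ⟨h1, by rw [J_n hm]; omega, fun y hy => ?_⟩
      exact (h3 y (decConn_J_left hm hy (by omega)).2)
    · exact ⟨by omega, by rw [J_n hm]; omega, fun y hy => (decConn_J_mid hm hy).1⟩
    · refine ⟨by omega, by rw [J_n hm]; omega, fun y hy => ?_⟩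
      obtain ⟨hy1, hy2⟩ := decConn_J_right hm hy (by omega)
      rw [Nat.add_sub_cancel] at hy2
      have := h3 _ hy2
      omega

/-- admissible sets are exactly unions of initial components. -/
lemma adm_iff (I2 : IntervalPoset) (m : ℕ) :
    adm I2 m ↔ m = I2.n ∨ (m < I2.n ∧ compMin I2 (m + 1)) := by
  constructor
  · intro hm
    rcases Nat.eq_or_lt_of_le hm.1 with h | h
    · exact Or.inl h
    · refine Or.inr ⟨h, by omega, by omega, fun y hy => conn_gt hm hy (by omega)⟩
  · rintro (rfl | ⟨hlt, h1, h2, h3⟩)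
    · exact ⟨le_rfl, fun a b hab _ => (I2.supp _ _ hab).2.1⟩
    · refine ⟨by omega, fun a b hab hbm => ?_⟩
      by_contra hc
      have hrel : I2.rel (m + 1) b := by
        rcases Nat.eq_or_lt_of_le (show m + 1 ≤ a by omega) with h | h
        · rwa [← h] at hab
        · exact I2.decCond b (m + 1) a hab (by omega) h
      have := h3 b (Relation.ReflTransGen.single (Or.inl ⟨hrel, by omega⟩))
      omega

end StmtAux
namespace StmtAux

open Classical

variable {I1 I2 : IntervalPoset} {m : ℕ}

lemma IntervalPoset.ext' {I I' : IntervalPoset} (h1 : I.n = I'.n) (h2 : I.rel = I'.rel) :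
    I = I' := by
  cases I; cases I'
  simp only at h1 h2
  subst h1; subst h2
  rfl

lemma J_mem_comp (hm : adm I2 m) : J I1 I2 m ∈ comp I1 I2 := by
  refine ⟨J_n hm, ?_, ?_, ?_, ?_⟩ <;> rw [J_rel hm]
  · intro a b ha1 ha2 hb1 hb2
    constructor
    · rintro (⟨_, _, h⟩ | ⟨h1, h2, h⟩ | ⟨h1, h2, h3⟩)
      · exact h
      · omega
      · omega
    · intro h; exact Or.inl ⟨ha2, hb2, h⟩
  · intro a b ha1 ha2 hb1 hb2
    constructor
    · rintro (⟨h1, h2, h⟩ | ⟨h1, h2, h⟩ | ⟨h1, h2, h3⟩)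
      · omega
      · have e1 : a + I1.n + 1 - (I1.n + 1) = a := by omega
        have e2 : b + I1.n + 1 - (I1.n + 1) = b := by omega
        rwa [e1, e2] at h
      · omega
    · intro h
      refine Or.inr (Or.inl ⟨by omega, by omega, ?_⟩)
      have e1 : a + I1.n + 1 - (I1.n + 1) = a := by omega
      have e2 : b + I1.n + 1 - (I1.n + 1) = b := by omega
      rw [e1, e2]; exact h
  · intro i hi1 hi2
    exact Or.inr (Or.inr ⟨rfl, hi1, by omega⟩)
  · intro j hj
    rintro (⟨h1, h2, h⟩ | ⟨h1, h2, h⟩ | ⟨h1, h2, h3⟩)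
    · omega
    · obtain ⟨s1, s2, s3, s4⟩ := I2.supp _ _ h
      omega
    · omega

lemma mem_comp_eq_J {I : IntervalPoset} (hI : I ∈ comp I1 I2) :
    ∃ m, adm I2 m ∧ I = J I1 I2 m := by
  obtain ⟨hn, hleft, hright, hmid, hnot⟩ := hI
  -- basic consequences
  have F5 : ∀ y, I.rel (I1.n + 1) y → y = I1.n + 1 := by
    intro y hy
    obtain ⟨s1, s2, s3, s4⟩ := I.supp _ _ hy
    rcases Nat.lt_or_ge y (I1.n + 1) with h | h
    · have := I.antisymm _ _ hy (hmid y s3 (by omega))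
      omega
    · rcases Nat.eq_or_lt_of_le h with h' | h'
      · omega
      · exact absurd hy (hnot y h')
  have F6 : ∀ a b, I.rel a b → a ≤ I1.n → I1.n + 2 ≤ b → False := by
    intro a b hab ha hb
    have := I.incCond a (I1.n + 1) b hab (by omega) (by omega)
    exact hnot b (by omega) this
  have F7 : ∀ a b, I.rel b a → a ≤ I1.n → I1.n + 2 ≤ b → False := by
    intro a b hab ha hb
    have h2 := I.decCond a (I1.n + 1) b hab (by omega) (by omega)
    have := F5 _ h2
    obtain ⟨s1, s2, s3, s4⟩ := I.supp _ _ h2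
    omega
  set P : ℕ → Prop := fun j => I.rel (I1.n + 1 + j) (I1.n + 1) with hP
  set m := Nat.findGreatest P I2.n with hmdef
  have F8 : ∀ j, 1 ≤ j → j ≤ m → P j := by
    intro j hj1 hj2
    have hPm : P m := Nat.findGreatest_of_ne_zero hmdef.symm (by omega)
    rcases Nat.eq_or_lt_of_le hj2 with h | h
    · rwa [h]
    · exact I.decCond (I1.n + 1) (I1.n + 1 + j) (I1.n + 1 + m) hPm (by omega) (by omega)
  have F9 : ∀ j, m < j → ¬ P j := by
    intro j hj hPj
    rcases Nat.lt_or_ge I2.n j with h | h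
    · obtain ⟨s1, s2, s3, s4⟩ := I.supp _ _ hPj
      omega
    · exact Nat.findGreatest_is_greatest hj h hPj
  have hadm : adm I2 m := by
    refine ⟨Nat.findGreatest_le _, fun a b hab hbm => ?_⟩
    obtain ⟨s1, s2, s3, s4⟩ := I2.supp _ _ hab
    have hIab : I.rel (a + I1.n + 1) (b + I1.n + 1) := (hright a b s1 s2 s3 s4).2 hab
    have hPb : P b := F8 b s3 hbm
    have hPa : P a := by
      have : I1.n + 1 + a = a + I1.n + 1 := by omega
      rw [hP]; simp only
      rw [this]
      exact I.trans _ _ _ hIab (by rw [show b + I1.n + 1 = I1.n + 1 + b by omega]; exact hPb)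
    by_contra hc
    exact F9 a (by omega) hPa
  refine ⟨m, hadm, IntervalPoset.ext' (by rw [J_n hadm, hn]) ?_⟩
  ext x y
  rw [J_rel hadm]
  constructor
  · intro hxy
    obtain ⟨s1, s2, s3, s4⟩ := I.supp _ _ hxy
    rw [hn] at s2 s4
    rcases Nat.lt_or_ge y (I1.n + 1) with hy | hy
    · -- y ≤ I1.n
      have hx : x ≤ I1.n := by
        by_contra hc
        rcases Nat.eq_or_lt_of_le (show I1.n + 1 ≤ x by omega) with h | h
        · rw [← h] at hxy; have := F5 _ hxy; omega
        · exact F7 y x hxy (by omega) (by omega)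
      exact Or.inl ⟨hx, by omega, (hleft x y s1 hx s3 (by omega)).1 hxy⟩
    · rcases Nat.eq_or_lt_of_le hy with hy' | hy'
      · refine Or.inr (Or.inr ⟨hy'.symm, s1, ?_⟩)
        rcases Nat.lt_or_ge (I1.n + 1) x with hx | hx
        · have hPx : P (x - (I1.n + 1)) := by
            rw [hP]; simp only
            rw [show I1.n + 1 + (x - (I1.n + 1)) = x by omega, hy']
            exact hxy
          by_contra hc
          exact F9 _ (by omega) hPx
        · omega
      · -- y ≥ I1.n + 2
        have hx : I1.n + 2 ≤ x := by
          by_contra hc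
          rcases Nat.lt_or_ge x (I1.n + 1) with h | h
          · exact F6 x y hxy (by omega) (by omega)
          · have hx1 : x = I1.n + 1 := by omega
            rw [hx1] at hxy
            have := F5 _ hxy; omega
        refine Or.inr (Or.inl ⟨hx, by omega, ?_⟩)
        have := (hright (x - (I1.n + 1)) (y - (I1.n + 1)) (by omega) (by omega)
          (by omega) (by omega)).1
        rw [show x - (I1.n + 1) + I1.n + 1 = x by omega,
          show y - (I1.n + 1) + I1.n + 1 = y by omega] at this
        exact this hxy
  · rintro (⟨hx, hy, h⟩ | ⟨hx, hy, h⟩ | ⟨hy, hx1, hx2⟩)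
    · obtain ⟨s1, s2, s3, s4⟩ := I1.supp _ _ h
      exact (hleft x y s1 s2 s3 s4).2 h
    · obtain ⟨s1, s2, s3, s4⟩ := I2.supp _ _ h
      have := (hright (x - (I1.n + 1)) (y - (I1.n + 1)) s1 s2 s3 s4).2 h
      rwa [show x - (I1.n + 1) + I1.n + 1 = x by omega,
        show y - (I1.n + 1) + I1.n + 1 = y by omega] at this
    · subst hy
      rcases Nat.lt_or_ge x (I1.n + 1) with h | h
      · exact hmid x hx1 (by omega)
      · rcases Nat.eq_or_lt_of_le h with h' | h'
        · rw [← h']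
          exact I.refl (I1.n + 1) (by omega) (by rw [hn]; omega)
        · have := F8 (x - (I1.n + 1)) (by omega) (by omega)
          simp only [hP] at this
          rwa [show I1.n + 1 + (x - (I1.n + 1)) = x by omega] at this

lemma comp_eq : comp I1 I2 = J I1 I2 '' {m | adm I2 m} := by
  ext I
  constructor
  · intro hI
    obtain ⟨m, hm, rfl⟩ := mem_comp_eq_J hI
    exact ⟨m, hm, rfl⟩
  · rintro ⟨m, hm, rfl⟩
    exact J_mem_comp hm

lemma J_injOn : Set.InjOn (J I1 I2) {m | adm I2 m} := by
  intro a ha b hb hab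
  by_contra hne
  wlog h : a < b generalizing a b
  · exact this hb ha hab.symm (Ne.symm hne) (by omega)
  have hrel := congrArg IntervalPoset.rel hab
  rw [J_rel ha, J_rel hb] at hrel
  have hJb : Jrel I1 I2 b (I1.n + 1 + b) (I1.n + 1) :=
    Or.inr (Or.inr ⟨rfl, by omega, by omega⟩)
  rw [← hrel] at hJb
  rcases hJb with ⟨h1, h2, h3⟩ | ⟨h1, h2, h3⟩ | ⟨h1, h2, h3⟩
  · omega
  · omega
  · omega

end StmtAux
namespace StmtAux

open Classical

variable {I1 I2 : IntervalPoset} {m : ℕ}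

noncomputable def MF (I : IntervalPoset) : Finset ℕ :=
  (Finset.Icc 1 I.n).filter (fun r => compMin I r)

lemma mem_MF {I : IntervalPoset} {r : ℕ} : r ∈ MF I ↔ compMin I r := by
  rw [MF, Finset.mem_filter, Finset.mem_Icc]
  exact ⟨fun h => h.2, fun h => ⟨⟨h.1, h.2.1⟩, h⟩⟩

lemma trees_eq (I : IntervalPoset) : trees I = (MF I).card := by
  rw [trees, show {r | compMin I r} = ↑(MF I) by ext r; simp [mem_MF],
    Set.ncard_coe_finset]

noncomputable def gg (I2 : IntervalPoset) (m : ℕ) : ℕ :=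
  ((MF I2).filter (fun r => m < r)).card

lemma trees_J (hm : adm I2 m) :
    trees (J I1 I2 m) = trees I1 + 1 + gg I2 m := by
  have hset : {r | compMin (J I1 I2 m) r} =
      ↑((MF I1 ∪ {I1.n + 1}) ∪ ((MF I2).filter (fun r => m < r)).image
        (fun r => r + (I1.n + 1))) := by
    ext r
    simp only [Set.mem_setOf_eq, compMin_J_iff hm, Finset.coe_union, Set.mem_union,
      Finset.mem_coe, Finset.mem_singleton, Finset.mem_image, Finset.mem_filter, mem_MF]
    constructor
    · rintro (h | h | ⟨r', h1, h2, h3⟩)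
      · exact Or.inl (Or.inl h)
      · exact Or.inl (Or.inr h)
      · exact Or.inr ⟨r', ⟨h1, h2⟩, h3.symm⟩
    · rintro ((h | h) | ⟨r', ⟨h1, h2⟩, h3⟩)
      · exact Or.inl h
      · exact Or.inr (Or.inl h)
      · exact Or.inr (Or.inr ⟨r', h1, h2, h3.symm⟩)
  rw [trees, hset, Set.ncard_coe_finset]
  rw [Finset.card_union_of_disjoint, Finset.card_union_of_disjoint]
  · rw [Finset.card_singleton, Finset.card_image_of_injective _ (add_left_injective _),
      trees_eq, gg]
  · rw [Finset.disjoint_left]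
    intro a ha
    rw [mem_MF] at ha
    simp only [Finset.mem_singleton]
    have := ha.2.1
    omega
  · rw [Finset.disjoint_left]
    intro a ha hc
    simp only [Finset.mem_image, Finset.mem_filter, mem_MF] at hc
    obtain ⟨r', ⟨h1, _⟩, h3⟩ := hc
    have hr1 := h1.1
    rcases Finset.mem_union.1 ha with h | h
    · rw [mem_MF] at h
      have := h.2.1
      omega
    · rw [Finset.mem_singleton] at h
      omega

noncomputable def AdmF (I2 : IntervalPoset) : Finset ℕ :=
  (Finset.Iic I2.n).filter (fun m => adm I2 m)

lemma mem_AdmF {m : ℕ} : m ∈ AdmF I2 ↔ adm I2 m := by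
  rw [AdmF, Finset.mem_filter, Finset.mem_Iic]
  exact ⟨fun h => h.2, fun h => ⟨h.1, h⟩⟩

lemma coe_AdmF : (↑(AdmF I2) : Set ℕ) = {m | adm I2 m} := by
  ext m; simp [mem_AdmF]

lemma AdmF_eq : AdmF I2 = insert I2.n ((MF I2).image (fun r => r - 1)) := by
  ext m
  rw [mem_AdmF, adm_iff, Finset.mem_insert]
  simp only [Finset.mem_image, mem_MF]
  constructor
  · rintro (h | ⟨h1, h2⟩)
    · exact Or.inl h
    · exact Or.inr ⟨m + 1, h2, by omega⟩
  · rintro (h | ⟨r, hr, hrm⟩)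
    · exact Or.inl h
    · have h1 := hr.1
      have h2 := hr.2.1
      refine Or.inr ⟨by omega, ?_⟩
      rwa [show m + 1 = r by omega]

lemma card_AdmF : (AdmF I2).card = trees I2 + 1 := by
  rw [AdmF_eq, Finset.card_insert_of_notMem, Finset.card_image_of_injOn, trees_eq]
  · intro a ha b hb hab
    rw [Finset.mem_coe, mem_MF] at ha hb
    have := ha.1; have := hb.1
    simp only at hab
    omega
  · simp only [Finset.mem_image, mem_MF, not_exists]
    rintro r ⟨hr, hrn⟩
    have := hr.1; have := hr.2.1
    omega

lemma gg_strict {a b : ℕ} (ha : a ∈ AdmF I2) (hb : b ∈ AdmF I2) (hab : a < b) :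
    gg I2 b < gg I2 a := by
  rw [mem_AdmF] at ha hb
  apply Finset.card_lt_card
  rw [Finset.ssubset_iff_of_subset]
  · refine ⟨a + 1, ?_, fun hc => by rw [Finset.mem_filter] at hc; omega⟩
    rw [Finset.mem_filter, mem_MF]
    have hbn := hb.1
    rcases (adm_iff I2 a).1 ha with h | h
    · omega
    · exact ⟨h.2, by omega⟩
  · intro x hx
    rw [Finset.mem_filter] at hx ⊢
    exact ⟨hx.1, by omega⟩

lemma gg_injOn : Set.InjOn (gg I2) ↑(AdmF I2) := by
  intro a ha b hb hab
  by_contra hne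
  rcases lt_trichotomy a b with h | h | h
  · exact absurd hab (by have := gg_strict (Finset.mem_coe.1 ha) (Finset.mem_coe.1 hb) h; omega)
  · exact hne h
  · exact absurd hab (by have := gg_strict (Finset.mem_coe.1 hb) (Finset.mem_coe.1 ha) h; omega)

lemma image_gg : (AdmF I2).image (gg I2) = Finset.range (trees I2 + 1) := by
  apply Finset.eq_of_subset_of_card_le
  · intro i hi
    simp only [Finset.mem_image] at hi
    obtain ⟨m, _, rfl⟩ := hi
    rw [Finset.mem_range, Nat.lt_succ_iff, trees_eq, gg]
    exact Finset.card_le_card (Finset.filter_subset _ _)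
  · rw [Finset.card_range, Finset.card_image_of_injOn gg_injOn, card_AdmF]

end StmtAux
/-- `Σ_{I ∈ 𝔹(I1,I2)} x^{trees I} = x^{trees I1 + 1} · (1 + x + ⋯ + x^{trees I2})`. -/
theorem stmt7 (I1 I2 : IntervalPoset) :
    (comp I1 I2).Finite ∧
    ∑ᶠ I ∈ comp I1 I2, (Polynomial.X : Polynomial ℤ) ^ trees I =
      Polynomial.X ^ (trees I1 + 1) *
        ∑ i ∈ Finset.range (trees I2 + 1), (Polynomial.X : Polynomial ℤ) ^ i := by
  have hfin : ({m | StmtAux.adm I2 m}).Finite := by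
    rw [← StmtAux.coe_AdmF]; exact (StmtAux.AdmF I2).finite_toSet
  constructor
  · rw [StmtAux.comp_eq]; exact hfin.image _
  · rw [StmtAux.comp_eq, finsum_mem_image StmtAux.J_injOn, ← StmtAux.coe_AdmF,
      finsum_mem_coe_finset]
    have h1 : ∑ m ∈ StmtAux.AdmF I2,
          (Polynomial.X : Polynomial ℤ) ^ trees (StmtAux.J I1 I2 m)
        = ∑ m ∈ StmtAux.AdmF I2,
          (Polynomial.X : Polynomial ℤ) ^ (trees I1 + 1 + StmtAux.gg I2 m) :=
      Finset.sum_congr rfl fun m hm => by rw [StmtAux.trees_J (StmtAux.mem_AdmF.1 hm)]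
    rw [h1]
    have h2 := Finset.sum_image
      (g := StmtAux.gg I2) (f := fun i => (Polynomial.X : Polynomial ℤ) ^ (trees I1 + 1 + i))
      (fun x hx y hy h => StmtAux.gg_injOn (Finset.mem_coe.2 hx) (Finset.mem_coe.2 hy) h)
    rw [← h2, StmtAux.image_gg, Finset.mul_sum]
    exact Finset.sum_congr rfl fun i _ => by simp [pow_add, mul_assoc]
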